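/- Let s : [1, ∞) → ℝ be locally integrable and slowly decreasing with respect to (L,1) summability: for every ε > 0 there exist t₀ > 1 and λ > 1 such that s(u) − s(t) ≥ −ε whenever t₀ ≤ t < u ≤ t^λ. If τ(t) := (1/log t) ∫₁ᵗ s(u)/u du → A as t → ∞, then s(t) → A as t → ∞. -/

import Mathlib

open Filter MeasureTheory Set

set_option maxHeartbeats 1000000 in
theorem corollary1
    (s : ℝ → ℝ) (hs : ∀ t : ℝ, IntegrableOn s (Icc 1 t)) (A : ℝ)
    (hsd : ∀ ε > (0:ℝ), ∃ t₀ > (1:ℝ), ∃ l > (1:ℝ),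
      ∀ t u : ℝ, t₀ ≤ t → t < u → u ≤ t ^ l → s u - s t ≥ -ε)
    (hL1 : Tendsto (fun t : ℝ => (Real.log t)⁻¹ * ∫ u in Ioc (1:ℝ) t, s u / u)
      atTop (nhds A)) :
    Tendsto s atTop (nhds A) := by
  -- integrability of s u / u on Ioc a b for 1 ≤ a
  have hint : ∀ a b : ℝ, 1 ≤ a → IntegrableOn (fun u => s u / u) (Ioc a b) := by
    intro a b ha
    rcases le_or_gt a b with hab | hab
    · have h1 : IntegrableOn s (Icc a b) := (hs b).mono_set (Icc_subset_Icc ha le_rfl)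
      have hcont : ContinuousOn (fun u : ℝ => u⁻¹) (Icc a b) := by
        apply ContinuousOn.inv₀ continuousOn_id
        intro x hx
        exact ne_of_gt (lt_of_lt_of_le one_pos (ha.trans hx.1))
      have h2 : IntegrableOn (fun u => s u * u⁻¹) (Icc a b) :=
        h1.mul_continuousOn hcont isCompact_Icc
      have h3 := h2.mono_set Ioc_subset_Icc_self
      simpa [div_eq_mul_inv] using h3
    · simp [Ioc_eq_empty (not_lt.mpr hab.le)]
  -- additivity of the integral
  have hadd : ∀ a b : ℝ, 1 ≤ a → a ≤ b →
      (∫ u in Ioc (1:ℝ) b, s u / u) =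
        (∫ u in Ioc (1:ℝ) a, s u / u) + ∫ u in Ioc a b, s u / u := by
    intro a b ha hab
    rw [← Ioc_union_Ioc_eq_Ioc ha hab,
      setIntegral_union (Ioc_disjoint_Ioc_of_le le_rfl) measurableSet_Ioc (hint 1 a le_rfl)
        (hint a b ha)]
  -- integral of a constant over u
  have hconst : ∀ (c a b : ℝ), 0 < a → a ≤ b →
      (∫ u in Ioc a b, c / u) = c * (Real.log b - Real.log a) := by
    intro c a b ha hab
    have hb : 0 < b := lt_of_lt_of_le ha hab
    rw [← intervalIntegral.integral_of_le hab]
    have h0 : (0:ℝ) ∉ uIcc a b := by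
      rw [Set.uIcc_of_le hab]
      intro h
      exact absurd h.1 (not_le.mpr ha)
    simp only [div_eq_mul_inv]
    rw [intervalIntegral.integral_const_mul, integral_inv h0,
      Real.log_div hb.ne' ha.ne']
  have hconstint : ∀ (c a b : ℝ), 0 < a → IntegrableOn (fun u => c / u) (Ioc a b) := by
    intro c a b ha
    rcases le_or_gt a b with hab | hab
    · have hcont : ContinuousOn (fun u : ℝ => c / u) (Icc a b) := by
        apply ContinuousOn.div continuousOn_const continuousOn_id
        intro x hx
        exact ne_of_gt (lt_of_lt_of_le ha hx.1)
      exact (hcont.integrableOn_compact isCompact_Icc).mono_set Ioc_subset_Icc_self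
    · simp [Ioc_eq_empty (not_lt.mpr hab.le)]
  -- main argument
  set τ : ℝ → ℝ := fun x => (Real.log x)⁻¹ * ∫ u in Ioc (1:ℝ) x, s u / u with hτ_def
  have hIτ : ∀ x : ℝ, 1 < x →
      (∫ u in Ioc (1:ℝ) x, s u / u) = Real.log x * τ x := by
    intro x hx
    have hlx : Real.log x ≠ 0 := (Real.log_pos hx).ne'
    simp only [hτ_def]
    rw [← mul_assoc, mul_inv_cancel₀ hlx, one_mul]
  rw [Metric.tendsto_atTop]
  intro ε hε
  obtain ⟨t₀, ht₀, l, hl, hslow⟩ := hsd (ε/4) (by linarith)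
  have hl0 : (0:ℝ) < l := by linarith
  set δ : ℝ := (ε/4) * (l-1)/(l+1) with hδdef
  have hδ : 0 < δ := by
    apply div_pos (mul_pos (by linarith) (by linarith)) (by linarith)
  have hδeq : δ * (l+1) = (ε/4) * (l-1) := by
    rw [hδdef]
    field_simp
  obtain ⟨N₀, hN₀⟩ := Metric.tendsto_atTop.mp hL1 δ hδ
  set N : ℝ := max N₀ 2 with hNdef
  have hN2 : (2:ℝ) ≤ N := le_max_right _ _
  have hN1 : (1:ℝ) < N := by linarith
  have hτbound : ∀ x : ℝ, N ≤ x → |τ x - A| < δ := by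
    intro x hx
    have := hN₀ x (le_trans (le_max_left _ _) hx)
    rwa [Real.dist_eq] at this
  refine ⟨max (N ^ l) (t₀ ^ l), fun t ht => ?_⟩
  have hNl : N ^ l ≤ t := le_trans (le_max_left _ _) ht
  have ht₀l : t₀ ^ l ≤ t := le_trans (le_max_right _ _) ht
  have hNN : N ≤ N ^ l := by
    calc N = N ^ (1:ℝ) := (Real.rpow_one N).symm
    _ ≤ N ^ l := Real.rpow_le_rpow_of_exponent_le (by linarith) hl.le
  have ht₀t₀ : t₀ ≤ t₀ ^ l := by
    calc t₀ = t₀ ^ (1:ℝ) := (Real.rpow_one t₀).symm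
    _ ≤ t₀ ^ l := Real.rpow_le_rpow_of_exponent_le ht₀.le hl.le
  have htN : N ≤ t := hNN.trans hNl
  have ht1 : (1:ℝ) < t := lt_of_lt_of_le hN1 htN
  have ht0 : (0:ℝ) < t := by linarith
  have ht₀t : t₀ ≤ t := ht₀t₀.trans ht₀l
  have hL : 0 < Real.log t := Real.log_pos ht1
  set u₁ : ℝ := t ^ l with hu₁def
  set u₀ : ℝ := t ^ l⁻¹ with hu₀def
  have htu₁ : t < u₁ := by
    calc t = t ^ (1:ℝ) := (Real.rpow_one t).symm
    _ < t ^ l := Real.rpow_lt_rpow_of_exponent_lt ht1 hl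
  have hu₀t : u₀ < t := by
    calc u₀ = t ^ l⁻¹ := rfl
    _ < t ^ (1:ℝ) := Real.rpow_lt_rpow_of_exponent_lt ht1 (by
        rw [inv_lt_one_iff₀]; right; exact hl)
    _ = t := Real.rpow_one t
  have hu₀pow : u₀ ^ l = t := by
    rw [hu₀def, ← Real.rpow_mul ht0.le, inv_mul_cancel₀ hl0.ne', Real.rpow_one]
  have hu₀t₀ : t₀ ≤ u₀ := by
    have h := Real.rpow_le_rpow (by positivity) ht₀l (inv_nonneg.mpr hl0.le)
    rwa [← Real.rpow_mul (by positivity : (0:ℝ) ≤ t₀), mul_inv_cancel₀ hl0.ne',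
      Real.rpow_one] at h
  have hu₀N : N ≤ u₀ := by
    have h := Real.rpow_le_rpow (by positivity) hNl (inv_nonneg.mpr hl0.le)
    rwa [← Real.rpow_mul (by positivity : (0:ℝ) ≤ N), mul_inv_cancel₀ hl0.ne',
      Real.rpow_one] at h
  have hu₀1 : (1:ℝ) < u₀ := lt_of_lt_of_le hN1 hu₀N
  have hu₁1 : (1:ℝ) < u₁ := lt_trans ht1 htu₁
  have hlogu₁ : Real.log u₁ = l * Real.log t := Real.log_rpow ht0 l
  have hlogu₀ : Real.log u₀ = l⁻¹ * Real.log t := Real.log_rpow ht0 l⁻¹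
  -- bounds on τ values
  have hb1 := abs_lt.mp (hτbound u₁ (htN.trans htu₁.le))
  have hbt := abs_lt.mp (hτbound t htN)
  have hb0 := abs_lt.mp (hτbound u₀ hu₀N)
  -- upper bound
  have key1 : (s t - ε/4) * (Real.log u₁ - Real.log t) ≤
      (∫ u in Ioc (1:ℝ) u₁, s u / u) - ∫ u in Ioc (1:ℝ) t, s u / u := by
    rw [hadd t u₁ ht1.le htu₁.le]
    have h := setIntegral_mono_on (hconstint (s t - ε/4) t u₁ ht0)
      (hint t u₁ ht1.le) measurableSet_Ioc (fun u hu => by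
        have hsl := hslow t u ht₀t hu.1 hu.2
        have hu0 : 0 < u := lt_trans ht0 hu.1
        rw [div_le_div_iff_of_pos_right hu0]
        linarith)
    rw [hconst (s t - ε/4) t u₁ ht0 htu₁.le] at h
    linarith
  have h1 : (s t - ε/4) * (l - 1) ≤ l * τ u₁ - τ t := by
    rw [hIτ u₁ hu₁1, hIτ t ht1, hlogu₁] at key1
    have h1' : ((s t - ε/4) * (l - 1)) * Real.log t ≤
        (l * τ u₁ - τ t) * Real.log t := by
      calc ((s t - ε/4) * (l - 1)) * Real.log t
          = (s t - ε/4) * (l * Real.log t - Real.log t) := by ring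
        _ ≤ l * Real.log t * τ u₁ - Real.log t * τ t := key1
        _ = (l * τ u₁ - τ t) * Real.log t := by ring
    exact le_of_mul_le_mul_right h1' hL
  -- lower bound
  have key2 : (∫ u in Ioc (1:ℝ) t, s u / u) - (∫ u in Ioc (1:ℝ) u₀, s u / u) ≤
      (s t + ε/4) * (Real.log t - Real.log u₀) := by
    rw [hadd u₀ t hu₀1.le hu₀t.le]
    have h := setIntegral_mono_on (hint u₀ t hu₀1.le)
      (hconstint (s t + ε/4) u₀ t (by linarith)) measurableSet_Ioc (fun u hu => by
        have hu0 : 0 < u := lt_trans (by linarith) hu.1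
        rcases eq_or_lt_of_le hu.2 with h | h
        · rw [h]
          rw [div_le_div_iff_of_pos_right ht0]
          linarith
        · have htu : t ≤ u ^ l := by
            rw [← hu₀pow]
            exact Real.rpow_le_rpow (by linarith) hu.1.le hl0.le
          have hsl := hslow u t (hu₀t₀.trans hu.1.le) h htu
          rw [div_le_div_iff_of_pos_right hu0]
          linarith)
    rw [hconst (s t + ε/4) u₀ t (by linarith) hu₀t.le] at h
    linarith
  have h2 : l * τ t - τ u₀ ≤ (s t + ε/4) * (l - 1) := by
    rw [hIτ t ht1, hIτ u₀ hu₀1, hlogu₀] at key2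
    have h2' : (l * τ t - τ u₀) * Real.log t ≤
        ((s t + ε/4) * (l - 1)) * Real.log t := by
      have hm := mul_le_mul_of_nonneg_left key2 hl0.le
      calc (l * τ t - τ u₀) * Real.log t
          = l * (Real.log t * τ t - l⁻¹ * Real.log t * τ u₀) := by
            field_simp
        _ ≤ l * ((s t + ε/4) * (Real.log t - l⁻¹ * Real.log t)) := hm
        _ = ((s t + ε/4) * (l - 1)) * Real.log t := by
            field_simp
    exact le_of_mul_le_mul_right h2' hL
  -- finish
  clear_value τ δ
  clear hint hadd hconst hconstint hIτ hτbound hN₀ hslow hL1 hs key1 key2 hsd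
  rw [Real.dist_eq, abs_lt]
  constructor
  · -- A - ε < s t, from h2
    have hub : l * τ t - τ u₀ > (l-1) * A - (l+1) * δ := by
      nlinarith [mul_lt_mul_of_pos_left hbt.1 hl0]
    have hc : (s t + ε/2 - A) * (l - 1) > 0 := by nlinarith [hub, h2, hδeq]
    have hx : 0 < s t + ε/2 - A := by
      by_contra h
      push_neg at h
      exact absurd (mul_nonpos_of_nonpos_of_nonneg h (by linarith)) (not_le.mpr hc)
    linarith
  · -- s t - A < ε, from h1
    have hub : l * τ u₁ - τ t < (l-1) * A + (l+1) * δ := by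
      nlinarith [mul_lt_mul_of_pos_left hb1.2 hl0]
    have hc : (s t - ε/2 - A) * (l - 1) < 0 := by nlinarith [hub, h1, hδeq]
    have hx : s t - ε/2 - A < 0 := by
      by_contra h
      push_neg at h
      exact absurd (mul_nonneg h (by linarith)) (not_le.mpr hc)
    linarith
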